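/- Every eigenvalue of the Normalized Directed Sheaf Hypergraph Laplacian L_N is at most 1; equivalently, I_{nd} − L_N = Q_N is positive semidefinite. Combined with positive semidefiniteness of L_N, the spectrum of L_N is contained in the interval [0,1]. -/

import Mathlib

open Matrix Complex Finset
open scoped ComplexOrder

noncomputable section

variable {V E : Type*} [Fintype V] [DecidableEq V] [Fintype E] [DecidableEq E] {d : ℕ}

/-- The vertex set of a hyperedge `e`: the union of its tail set `T e` and head set `Hd e`. -/
def everts (T Hd : E → Finset V) (e : E) : Finset V := T e ∪ Hd e

/-- The degree `δ_e` of a hyperedge. -/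
def edeg (T Hd : E → Finset V) (e : E) : ℕ := (everts T Hd e).card

/-- The directional scalar `S^{(q)}_{u ⊴ e}`. -/
def dirS (T Hd : E → Finset V) (q : ℝ) (e : E) (u : V) : ℂ :=
  if u ∈ Hd e then 1
  else if u ∈ T e then Complex.exp (-(2 * Real.pi * q) * Complex.I)
  else 0

/-- The complex restriction map `F⃗_{u ⊴ e} = S^{(q)}_{u ⊴ e} • F_{u ⊴ e}`. -/
def Fdir (T Hd : E → Finset V) (q : ℝ) (F : V → E → Matrix (Fin d) (Fin d) ℝ)
    (u : V) (e : E) : Matrix (Fin d) (Fin d) ℂ :=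
  dirS T Hd q e u • (F u e).map (fun a => (a : ℂ))

/-- The block incidence matrix `B^{(q)} ∈ ℂ^{md × nd}`. -/
def Bmat (T Hd : E → Finset V) (q : ℝ) (F : V → E → Matrix (Fin d) (Fin d) ℝ) :
    Matrix (E × Fin d) (V × Fin d) ℂ :=
  Matrix.of fun p r =>
    if r.1 ∈ everts T Hd p.1 then Fdir T Hd q F r.1 p.1 p.2 r.2 else 0

/-- The block diagonal matrix `D_E^{-1}`, with blocks `δ_e⁻¹ • I_d`. -/
def DEinv (T Hd : E → Finset V) (d : ℕ) : Matrix (E × Fin d) (E × Fin d) ℂ :=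
  Matrix.diagonal fun p => ((edeg T Hd p.1 : ℂ))⁻¹

/-- The node degree block `D_u = Σ_{e : u ∈ e} F_{u⊴e}ᵀ F_{u⊴e}`. -/
def Dblk (T Hd : E → Finset V) (F : V → E → Matrix (Fin d) (Fin d) ℝ) (u : V) :
    Matrix (Fin d) (Fin d) ℝ :=
  ∑ e ∈ Finset.univ.filter (fun e => u ∈ everts T Hd e), (F u e)ᵀ * F u e

/-- The block diagonal node degree matrix `D_V ∈ ℝ^{nd×nd}` (viewed as a complex matrix). -/
def DVmat (T Hd : E → Finset V) (F : V → E → Matrix (Fin d) (Fin d) ℝ) :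
    Matrix (V × Fin d) (V × Fin d) ℂ :=
  Matrix.of fun p r => if p.1 = r.1 then ((Dblk T Hd F p.1 p.2 r.2 : ℝ) : ℂ) else 0

/-- The Directed Sheaf Hypergraph Laplacian `L = D_V − B^{(q)†} D_E^{-1} B^{(q)}`. -/
def Lap (T Hd : E → Finset V) (q : ℝ) (F : V → E → Matrix (Fin d) (Fin d) ℝ) :
    Matrix (V × Fin d) (V × Fin d) ℂ :=
  DVmat T Hd F - (Bmat T Hd q F)ᴴ * DEinv T Hd d * Bmat T Hd q F

/-- The block diagonal matrix with blocks `(R u)⁻¹`; when `R u` is the positive square root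
of `D_u`, this is `D_V^{-1/2}`. -/
def Pinv (R : V → Matrix (Fin d) (Fin d) ℂ) : Matrix (V × Fin d) (V × Fin d) ℂ :=
  Matrix.of fun p r => if p.1 = r.1 then (R p.1)⁻¹ p.2 r.2 else 0

/-- The Normalized Directed Sheaf Hypergraph Laplacian `L_N = D_V^{-1/2} L D_V^{-1/2}`. -/
def LapN (T Hd : E → Finset V) (q : ℝ) (F : V → E → Matrix (Fin d) (Fin d) ℝ)
    (R : V → Matrix (Fin d) (Fin d) ℂ) : Matrix (V × Fin d) (V × Fin d) ℂ :=
  Pinv R * Lap T Hd q F * Pinv R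


/-- The normalized signless Laplacian `Q_N = D_V^{-1/2} B^{(q)†} D_E^{-1} B^{(q)} D_V^{-1/2}`. -/
def QN (T Hd : E → Finset V) (q : ℝ) (F : V → E → Matrix (Fin d) (Fin d) ℝ)
    (R : V → Matrix (Fin d) (Fin d) ℂ) : Matrix (V × Fin d) (V × Fin d) ℂ :=
  Pinv R * ((Bmat T Hd q F)ᴴ * DEinv T Hd d * Bmat T Hd q F) * Pinv R

/-! ### Auxiliary lemmas -/

/-- Block diagonal matrix built from per-vertex blocks. -/
def blk (M : V → Matrix (Fin d) (Fin d) ℂ) : Matrix (V × Fin d) (V × Fin d) ℂ :=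
  Matrix.of fun p r => if p.1 = r.1 then M p.1 p.2 r.2 else 0

lemma blk_mul (M N : V → Matrix (Fin d) (Fin d) ℂ) :
    blk M * blk N = blk (fun u => M u * N u) := by
  ext ⟨u, i⟩ ⟨v, j⟩
  simp only [Matrix.mul_apply, Fintype.sum_prod_type, blk, Matrix.of_apply]
  rw [Finset.sum_eq_single u]
  · by_cases h : u = v <;> simp [h, Matrix.mul_apply]
  · intro w _ hw
    simp [Ne.symm hw]
  · simp

lemma blk_one : blk (fun _ : V => (1 : Matrix (Fin d) (Fin d) ℂ)) = 1 := by
  ext ⟨u, i⟩ ⟨v, j⟩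
  simp [blk, Matrix.one_apply, Prod.ext_iff, ite_and]

lemma blk_conjTranspose (M : V → Matrix (Fin d) (Fin d) ℂ) :
    (blk M)ᴴ = blk (fun u => (M u)ᴴ) := by
  ext ⟨u, i⟩ ⟨v, j⟩
  by_cases h : u = v
  · subst h
    simp [blk, Matrix.conjTranspose_apply]
  · simp [blk, Matrix.conjTranspose_apply, h, Ne.symm h]

lemma blk_quadform (M : V → Matrix (Fin d) (Fin d) ℂ) (x : V × Fin d → ℂ) :
    dotProduct (star x) (blk M *ᵥ x)
      = ∑ u, dotProduct (star fun i => x (u, i)) (M u *ᵥ fun i => x (u, i)) := by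
  simp only [dotProduct, Matrix.mulVec, dotProduct, Fintype.sum_prod_type, Pi.star_apply,
    blk, Matrix.of_apply]
  refine Finset.sum_congr rfl fun u _ => Finset.sum_congr rfl fun i _ => ?_
  congr 1
  rw [Finset.sum_eq_single u]
  · simp
  · intro w _ hw
    simp [Ne.symm hw]
  · simp

lemma quad_conj (A : Matrix (Fin d) (Fin d) ℂ) (y : Fin d → ℂ) :
    dotProduct (star y) ((Aᴴ * A) *ᵥ y) = dotProduct (star (A *ᵥ y)) (A *ᵥ y) := by
  rw [← Matrix.mulVec_mulVec, Matrix.dotProduct_mulVec, Matrix.star_mulVec]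

lemma star_dot_self (w : Fin d → ℂ) :
    dotProduct (star w) w = ((∑ k, Complex.normSq (w k) : ℝ) : ℂ) := by
  simp only [dotProduct, Pi.star_apply, Complex.star_def]
  push_cast
  exact Finset.sum_congr rfl fun k _ => by rw [mul_comm, Complex.mul_conj]

lemma sum_swap_mem {E' : Type*} [Fintype E'] (s : E' → Finset V) (f : E' → V → ℝ) :
    ∑ e, ∑ v ∈ s e, f e v
      = ∑ v, ∑ e ∈ Finset.univ.filter (fun e => v ∈ s e), f e v := by
  have h1 : ∀ e, ∑ v ∈ s e, f e v = ∑ v, if v ∈ s e then f e v else 0 := by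
    intro e
    rw [Finset.sum_ite_mem, Finset.univ_inter]
  simp_rw [h1, Finset.sum_filter]
  exact Finset.sum_comm

lemma sum_mulVec' {i : Type*} (s : Finset i) (M : i → Matrix (Fin d) (Fin d) ℂ)
    (v : Fin d → ℂ) : (∑ e ∈ s, M e) *ᵥ v = ∑ e ∈ s, M e *ᵥ v := by
  ext k
  simp only [Matrix.mulVec, dotProduct, Matrix.sum_apply, Finset.sum_apply, Finset.sum_mul]
  exact Finset.sum_comm

lemma dotProduct_sum' {i : Type*} (s : Finset i) (w : Fin d → ℂ) (f : i → Fin d → ℂ) :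
    dotProduct w (∑ e ∈ s, f e) = ∑ e ∈ s, dotProduct w (f e) := by
  simp only [dotProduct, Finset.sum_apply, Finset.mul_sum]
  exact Finset.sum_comm

lemma spec_aux {n : Type*} [Fintype n] [DecidableEq n] {A : Matrix n n ℂ}
    (hA : A.PosSemidef) (hA' : (1 - A).PosSemidef) {μ : ℂ} (hμ : μ ∈ spectrum ℂ A) :
    ∃ r : ℝ, μ = (r : ℂ) ∧ 0 ≤ r ∧ r ≤ 1 := by
  have h1 : ¬IsUnit (algebraMap ℂ (Matrix n n ℂ) μ - A) := spectrum.mem_iff.mp hμ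
  rw [Matrix.isUnit_iff_isUnit_det, isUnit_iff_ne_zero, not_not] at h1
  obtain ⟨v, hv0, hv⟩ := Matrix.exists_mulVec_eq_zero_iff.mpr h1
  have hAv : A *ᵥ v = μ • v := by
    rw [Matrix.sub_mulVec, sub_eq_zero] at hv
    rw [← hv, Matrix.algebraMap_eq_diagonal]
    funext i
    simp [Matrix.mulVec_diagonal]
  have hcpos : 0 < dotProduct (star v) v := Matrix.dotProduct_star_self_pos_iff.mpr hv0
  have h3 : 0 ≤ μ * dotProduct (star v) v := by
    have h := hA.dotProduct_mulVec_nonneg v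
    rwa [hAv, dotProduct_smul, smul_eq_mul] at h
  have h4 : 0 ≤ dotProduct (star v) v - μ * dotProduct (star v) v := by
    have h := hA'.dotProduct_mulVec_nonneg v
    rwa [Matrix.sub_mulVec, dotProduct_sub, Matrix.one_mulVec, hAv,
      dotProduct_smul, smul_eq_mul] at h
  set c := dotProduct (star v) v with hc
  rw [Complex.lt_def] at hcpos
  rw [Complex.le_def] at h3 h4
  simp only [Complex.zero_re, Complex.zero_im, Complex.mul_re, Complex.mul_im,
    Complex.sub_re, Complex.sub_im] at hcpos h3 h4
  obtain ⟨hcre, hcim⟩ := hcpos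
  have him : μ.im = 0 := by
    have := h3.2
    rw [← hcim] at this
    simp at this
    rcases this with h | h
    · exact h
    · exact absurd h (by linarith)
  refine ⟨μ.re, ?_, ?_, ?_⟩
  · exact Complex.ext rfl (by simp [him])
  · have := h3.1
    rw [← hcim] at this
    simp at this
    nlinarith
  · have := h4.2
    have h5 := h4.1
    rw [← hcim] at h5
    simp at h5
    nlinarith

theorem normalized_directed_sheaf_laplacian_spectrum_le_one
    (T Hd : E → Finset V) (q : ℝ) (F : V → E → Matrix (Fin d) (Fin d) ℝ)
    (R : V → Matrix (Fin d) (Fin d) ℂ)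
    (hd : 0 < d)
    (hdisj : ∀ e, Disjoint (T e) (Hd e))
    (hne : ∀ e, (everts T Hd e).Nonempty)
    (hpos : ∀ u, (Dblk T Hd F u).PosDef)
    (hR : ∀ u, (R u).PosSemidef)
    (hRsq : ∀ u, R u * R u = (Dblk T Hd F u).map (fun a => (a : ℂ))) :
    (1 - LapN T Hd q F R = QN T Hd q F R) ∧
    (QN T Hd q F R).PosSemidef ∧
    (∀ μ : ℂ, μ ∈ spectrum ℂ (LapN T Hd q F R) →
      ∃ r : ℝ, μ = (r : ℂ) ∧ 0 ≤ r ∧ r ≤ 1) := by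
  -- invertibility of each `R u`
  have hRu : ∀ u, IsUnit (R u).det := by
    intro u
    have hdet2 : ((Dblk T Hd F u).map (fun a => (a : ℂ))).det = ((Dblk T Hd F u).det : ℂ) := by
      rw [show ((Dblk T Hd F u).map (fun a => (a : ℂ)))
          = Complex.ofRealHom.mapMatrix (Dblk T Hd F u) from rfl, ← RingHom.map_det]
      rfl
    have hdet : (R u).det * (R u).det = ((Dblk T Hd F u).det : ℂ) := by
      rw [← Matrix.det_mul, hRsq u, hdet2]
    have hne0 : (R u).det ≠ 0 := by
      intro h0
      rw [h0, mul_zero] at hdet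
      have hp := (hpos u).det_pos
      have h00 : ((Dblk T Hd F u).det : ℂ) = 0 := hdet.symm
      rw [Complex.ofReal_eq_zero] at h00
      exact absurd h00 (ne_of_gt hp)
    exact isUnit_iff_ne_zero.mpr hne0
  have hkey : ∀ u, (R u)⁻¹ * ((Dblk T Hd F u).map (fun a => (a : ℂ))) * (R u)⁻¹ = 1 := by
    intro u
    rw [← hRsq u, ← Matrix.mul_assoc, Matrix.nonsing_inv_mul _ (hRu u), Matrix.one_mul,
      Matrix.mul_nonsing_inv _ (hRu u)]
  have e1 : Pinv R = blk (fun u => (R u)⁻¹) := rfl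
  have e2 : DVmat T Hd F = blk (fun u => (Dblk T Hd F u).map (fun a => (a : ℂ))) := rfl
  have hPD : Pinv R * DVmat T Hd F * Pinv R = 1 := by
    rw [e1, e2, blk_mul, blk_mul, ← blk_one]
    refine congrArg blk (funext fun u => ?_)
    exact hkey u
  -- Part 1
  have hpart1 : 1 - LapN T Hd q F R = QN T Hd q F R := by
    have h : LapN T Hd q F R = 1 - QN T Hd q F R := by
      unfold LapN Lap QN
      rw [Matrix.mul_sub, Matrix.sub_mul, hPD]
    rw [h, sub_sub_cancel]
  -- Hermitian facts
  have hPH : (Pinv R)ᴴ = Pinv R := by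
    rw [e1, blk_conjTranspose]
    refine congrArg blk (funext fun u => ?_)
    exact (hR u).1.inv
  have hDE : (DEinv T Hd d (E := E)).PosSemidef := by
    refine Matrix.PosSemidef.diagonal fun p => ?_
    rw [show ((edeg T Hd p.1 : ℂ))⁻¹ = (((edeg T Hd p.1 : ℝ)⁻¹ : ℝ) : ℂ) by push_cast; ring]
    exact Complex.zero_le_real.mpr (by positivity)
  -- Part 2
  have hQN : (QN T Hd q F R).PosSemidef := by
    have h0 : QN T Hd q F R
        = (Bmat T Hd q F * Pinv R)ᴴ * DEinv T Hd d * (Bmat T Hd q F * Pinv R) := by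
      unfold QN
      rw [Matrix.conjTranspose_mul, hPH]
      simp only [Matrix.mul_assoc]
    rw [h0]
    exact hDE.conjTranspose_mul_mul_same _
  -- positive semidefiniteness of `Lap`
  have hXpsd : ((Bmat T Hd q F)ᴴ * DEinv T Hd d * Bmat T Hd q F).PosSemidef :=
    hDE.conjTranspose_mul_mul_same _
  have hsym : ∀ u, (Dblk T Hd F u)ᵀ = Dblk T Hd F u := by
    intro u
    unfold Dblk
    rw [Matrix.transpose_sum]
    exact Finset.sum_congr rfl fun e _ => by
      rw [Matrix.transpose_mul, Matrix.transpose_transpose]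
  have hDVh : (DVmat T Hd F).IsHermitian := by
    show (DVmat T Hd F)ᴴ = DVmat T Hd F
    rw [e2, blk_conjTranspose]
    refine congrArg blk (funext fun u => ?_)
    ext i j
    simp only [Matrix.conjTranspose_apply, Matrix.map_apply, Complex.star_def,
      Complex.conj_ofReal]
    rw [show Dblk T Hd F u j i = (Dblk T Hd F u)ᵀ i j from rfl, hsym u]
  have hLap : (Lap T Hd q F).PosSemidef := by
    refine Matrix.PosSemidef.of_dotProduct_mulVec_nonneg ?_ ?_
    · exact hDVh.sub hXpsd.1
    · intro x
      -- the two quadratic forms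
      set g : V → E → Fin d → ℂ :=
        fun u e => ((F u e).map (fun a => (a : ℂ))) *ᵥ (fun i => x (u, i)) with hg
      set y : E × Fin d → ℂ := Bmat T Hd q F *ᵥ x with hyd
      set a : ℝ := ∑ u, ∑ e ∈ Finset.univ.filter (fun e => u ∈ everts T Hd e),
        ∑ k, Complex.normSq (g u e k) with ha
      set b : ℝ := ∑ e, ∑ k, (edeg T Hd e : ℝ)⁻¹ * Complex.normSq (y (e, k)) with hb
      have hDmap : ∀ u, (Dblk T Hd F u).map (fun a => (a : ℂ))
          = ∑ e ∈ Finset.univ.filter (fun e => u ∈ everts T Hd e),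
              ((F u e).map (fun a => (a : ℂ)))ᴴ * ((F u e).map (fun a => (a : ℂ))) := by
        intro u
        ext i j
        simp only [Matrix.map_apply, Dblk, Matrix.sum_apply, Matrix.mul_apply,
          Matrix.conjTranspose_apply, Matrix.transpose_apply, Complex.star_def,
          Complex.conj_ofReal]
        push_cast
        rfl
      have hQD : dotProduct (star x) (DVmat T Hd F *ᵥ x) = (a : ℂ) := by
        rw [e2, blk_quadform]
        rw [ha]
        push_cast
        refine Finset.sum_congr rfl fun u _ => ?_
        rw [hDmap u, sum_mulVec', dotProduct_sum']
        push_cast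
        refine Finset.sum_congr rfl fun e _ => ?_
        rw [quad_conj, star_dot_self]
        push_cast
        rfl
      have hy : ∀ e k, y (e, k) = ∑ v ∈ everts T Hd e, dirS T Hd q e v * g v e k := by
        intro e k
        show dotProduct (Bmat T Hd q F (e, k)) x = _
        rw [dotProduct, Fintype.sum_prod_type]
        have h1 : ∀ v : V, ∑ j, Bmat T Hd q F (e, k) (v, j) * x (v, j)
            = if v ∈ everts T Hd e then dirS T Hd q e v * g v e k else 0 := by
          intro v
          by_cases h : v ∈ everts T Hd e
          · simp only [Bmat, Matrix.of_apply, h, if_true, Fdir, Matrix.smul_apply,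
              smul_eq_mul, hg, Matrix.mulVec, dotProduct, Finset.mul_sum]
            exact Finset.sum_congr rfl fun j _ => by ring
          · simp [Bmat, h]
        simp_rw [h1]
        rw [Finset.sum_ite_mem, Finset.univ_inter]
      have hQX : dotProduct (star x)
          (((Bmat T Hd q F)ᴴ * DEinv T Hd d * Bmat T Hd q F) *ᵥ x) = (b : ℂ) := by
        rw [← Matrix.mulVec_mulVec, ← Matrix.mulVec_mulVec, Matrix.dotProduct_mulVec,
          ← Matrix.star_mulVec, ← hyd]
        rw [hb]
        push_cast
        rw [dotProduct, Fintype.sum_prod_type]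
        refine Finset.sum_congr rfl fun e _ => Finset.sum_congr rfl fun k _ => ?_
        simp only [DEinv, Matrix.mulVec_diagonal, Pi.star_apply, Complex.star_def]
        rw [← Complex.mul_conj]
        ring
      have habs : ∀ e v, v ∈ everts T Hd e → ‖dirS T Hd q e v‖ = 1 := by
        intro e v hv
        unfold dirS
        by_cases h1 : v ∈ Hd e
        · simp [h1]
        · have h2 : v ∈ T e := by
            rcases Finset.mem_union.mp hv with h | h
            · exact h
            · exact absurd h h1
          simp only [h1, if_false, h2, if_true]
          rw [Complex.norm_exp]
          norm_num [Complex.mul_re]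
      have hba : b ≤ a := by
        have key : ∀ e k, (edeg T Hd e : ℝ)⁻¹ * Complex.normSq (y (e, k))
            ≤ ∑ v ∈ everts T Hd e, Complex.normSq (g v e k) := by
          intro e k
          have hδ : (0 : ℝ) < (edeg T Hd e : ℝ) := by
            exact_mod_cast Finset.card_pos.mpr (hne e)
          rw [inv_mul_le_iff₀ hδ]
          rw [hy e k]
          calc Complex.normSq (∑ v ∈ everts T Hd e, dirS T Hd q e v * g v e k)
              = (‖∑ v ∈ everts T Hd e, dirS T Hd q e v * g v e k‖) ^ 2 :=
                (Complex.sq_norm _).symm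
            _ ≤ (∑ v ∈ everts T Hd e, ‖dirS T Hd q e v * g v e k‖) ^ 2 :=
                pow_le_pow_left₀ (norm_nonneg _) (norm_sum_le _ _) 2
            _ = (∑ v ∈ everts T Hd e, ‖g v e k‖) ^ 2 := by
                congr 1
                refine Finset.sum_congr rfl fun v hv => ?_
                rw [norm_mul, habs e v hv, one_mul]
            _ ≤ ((everts T Hd e).card : ℝ) * ∑ v ∈ everts T Hd e, (‖g v e k‖) ^ 2 :=
                sq_sum_le_card_mul_sum_sq
            _ = (edeg T Hd e : ℝ) * ∑ v ∈ everts T Hd e, Complex.normSq (g v e k) := by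
                congr 1
                exact Finset.sum_congr rfl fun v _ => Complex.sq_norm _
        calc b ≤ ∑ e, ∑ k, ∑ v ∈ everts T Hd e, Complex.normSq (g v e k) := by
              rw [hb]
              exact Finset.sum_le_sum fun e _ => Finset.sum_le_sum fun k _ => key e k
          _ = ∑ e, ∑ v ∈ everts T Hd e, ∑ k, Complex.normSq (g v e k) := by
              exact Finset.sum_congr rfl fun e _ => Finset.sum_comm
          _ = a := by
              rw [ha]
              exact sum_swap_mem _ _
      unfold Lap
      rw [Matrix.sub_mulVec, dotProduct_sub, hQD, hQX, ← Complex.ofReal_sub]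
      exact Complex.zero_le_real.mpr (by linarith)
  -- Part 3
  have hLapN : (LapN T Hd q F R).PosSemidef := by
    have h := hLap.conjTranspose_mul_mul_same (Pinv R)
    rw [hPH] at h
    exact h
  refine ⟨hpart1, hQN, fun μ hμ => ?_⟩
  have h1A : (1 - LapN T Hd q F R).PosSemidef := by
    rw [hpart1]; exact hQN
  exact spec_aux hLapN h1A hμ

end
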